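/- Let η₁, η₂, η₃ > 0 be real numbers. The characteristic polynomial of the 4×4 matrix B = B(η₁, η₂, η₃) equals P₄(X) = X⁴ + (η₁ + η₂ + η₃ + 4)X³ + ((3/4)η₂η₁ + (5/2)η₂ + η₃η₁ + (3/4)η₃η₂ + 2η₃ + 6 + 2η₁)X² + ((1/2)η₃η₂η₁ + (3/4)η₃η₂ + η₂ + 4 + (3/4)η₂η₁ + 2η₁)X − (3/4)η₃η₂ − (1/4)η₃η₂η₁ − (3/4)η₂ − (1/4)η₂η₁, and P₄ has exactly one nonnegative real root; this root is positive and simple. (Spectral core of Theorem 3 for N = 4.) -/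
import Mathlib


open Polynomial

set_option maxHeartbeats 1000000 in
theorem det_fin_four' {R : Type*} [CommRing R] (A : Matrix (Fin 4) (Fin 4) R) :
    A.det =
      A 0 0 * (A 1 1 * (A 2 2 * A 3 3 - A 2 3 * A 3 2)
             - A 1 2 * (A 2 1 * A 3 3 - A 2 3 * A 3 1)
             + A 1 3 * (A 2 1 * A 3 2 - A 2 2 * A 3 1))
    - A 0 1 * (A 1 0 * (A 2 2 * A 3 3 - A 2 3 * A 3 2)
             - A 1 2 * (A 2 0 * A 3 3 - A 2 3 * A 3 0)
             + A 1 3 * (A 2 0 * A 3 2 - A 2 2 * A 3 0))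
    + A 0 2 * (A 1 0 * (A 2 1 * A 3 3 - A 2 3 * A 3 1)
             - A 1 1 * (A 2 0 * A 3 3 - A 2 3 * A 3 0)
             + A 1 3 * (A 2 0 * A 3 1 - A 2 1 * A 3 0))
    - A 0 3 * (A 1 0 * (A 2 1 * A 3 2 - A 2 2 * A 3 1)
             - A 1 1 * (A 2 0 * A 3 2 - A 2 2 * A 3 0)
             + A 1 2 * (A 2 0 * A 3 1 - A 2 1 * A 3 0)) := by
  have e1 : (Fin.succ 2 : Fin 4) = 3 := by decide
  have e2 : Fin.succAbove (1 : Fin 4) 2 = 3 := by decide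
  have e3 : Fin.succAbove (2 : Fin 4) 1 = 1 := by decide
  have e4 : Fin.succAbove (2 : Fin 4) 2 = 3 := by decide
  have e5 : Fin.succAbove (3 : Fin 4) 1 = 1 := by decide
  have e6 : Fin.succAbove (3 : Fin 4) 2 = 2 := by decide
  have e7 : ((-1 : R)) ^ ((3 : Fin 4) : ℕ) = -1 := by
    norm_num [show ((3 : Fin 4) : ℕ) = 3 from rfl]
  rw [Matrix.det_succ_row_zero, Fin.sum_univ_four]
  simp [Matrix.det_fin_three, Matrix.submatrix, Fin.succ_ne_zero, e1, e2, e3, e4, e5, e6, e7]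
  ring

/-- For `η₁, η₂, η₃ > 0`, the characteristic polynomial of the 4×4
residue matrix `B(η₁, η₂, η₃)` of the bounded whole-plane LLE (N = 4) equals the
explicit quartic `P₄` below, and `P₄` has exactly one nonnegative real root; this
root is positive and simple. -/
theorem boundedLLE_N4_charpoly_and_root (η₁ η₂ η₃ : ℝ)
    (h₁ : 0 < η₁) (h₂ : 0 < η₂) (h₃ : 0 < η₃)
    (P : Polynomial ℝ)
    (hP : P = X ^ 4 + C (η₁ + η₂ + η₃ + 4) * X ^ 3
        + C ((3 / 4) * η₂ * η₁ + (5 / 2) * η₂ + η₃ * η₁ + (3 / 4) * η₃ * η₂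
            + 2 * η₃ + 6 + 2 * η₁) * X ^ 2
        + C ((1 / 2) * η₃ * η₂ * η₁ + (3 / 4) * η₃ * η₂ + η₂ + 4
            + (3 / 4) * η₂ * η₁ + 2 * η₁) * X
        + C (-(3 / 4) * η₃ * η₂ - (1 / 4) * η₃ * η₂ * η₁
            - (3 / 4) * η₂ - (1 / 4) * η₂ * η₁)) :
    Matrix.charpoly
        (!![-1, 2, 0, 0;
            (η₁ + 1) / 2, -η₁ - 1, (η₁ + 3) / 2, 0;
            0, η₂ / 2, -η₂ - 1, (η₂ + 4) / 2;
            0, 0, (η₃ - 1) / 2, -η₃ - 1] : Matrix (Fin 4) (Fin 4) ℝ) = P ∧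
    ∃ x : ℝ, 0 < x ∧ P.IsRoot x ∧ P.derivative.eval x ≠ 0 ∧
      ∀ y : ℝ, 0 ≤ y → P.IsRoot y → y = x := by
  constructor
  · rw [Matrix.charpoly, det_fin_four', hP]
    apply Polynomial.funext
    intro t
    simp [Matrix.charmatrix_apply, Matrix.one_apply, Matrix.vecHead, Matrix.vecTail]
    ring
  · set a : ℝ := η₁ + η₂ + η₃ + 4 with ha
    set b : ℝ := (3 / 4) * η₂ * η₁ + (5 / 2) * η₂ + η₃ * η₁ + (3 / 4) * η₃ * η₂
              + 2 * η₃ + 6 + 2 * η₁ with hb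
    set c : ℝ := (1 / 2) * η₃ * η₂ * η₁ + (3 / 4) * η₃ * η₂ + η₂ + 4
              + (3 / 4) * η₂ * η₁ + 2 * η₁ with hc
    set d : ℝ := -(3 / 4) * η₃ * η₂ - (1 / 4) * η₃ * η₂ * η₁
              - (3 / 4) * η₂ - (1 / 4) * η₂ * η₁ with hd
    have ha' : 0 < a := by rw [ha]; positivity
    have hb' : 0 < b := by rw [hb]; positivity
    have hc' : 0 < c := by rw [hc]; positivity
    have hd' : d < 0 := by
      rw [hd]
      nlinarith [mul_pos h₂ h₃, mul_pos (mul_pos h₃ h₂) h₁, mul_pos h₂ h₁]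
    have heval : ∀ t : ℝ, P.eval t = t ^ 4 + a * t ^ 3 + b * t ^ 2 + c * t + d := by
      intro t; simp [hP]
    have hderiv : ∀ t : ℝ, P.derivative.eval t
        = 4 * t ^ 3 + 3 * a * t ^ 2 + 2 * b * t + c := by
      intro t
      rw [hP]
      simp [derivative_add, derivative_mul]
      ring
    have hmono : StrictMonoOn (fun t : ℝ => P.eval t) (Set.Ici 0) := by
      apply strictMonoOn_of_deriv_pos (convex_Ici 0) (P.continuous.continuousOn)
      intro t ht
      rw [interior_Ici] at ht
      rw [Polynomial.deriv, hderiv]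
      have : 0 < t := ht
      positivity
    set M : ℝ := (1 - d) / c with hM
    have hM0 : 0 < M := by
      rw [hM]; apply div_pos; linarith; exact hc'
    have hPM : 0 < P.eval M := by
      rw [heval]
      have hcm : c * M = 1 - d := by rw [hM, mul_div_cancel₀ _ (ne_of_gt hc')]
      nlinarith [pow_pos hM0 4, mul_pos ha' (pow_pos hM0 3), mul_pos hb' (pow_pos hM0 2)]
    have hP0 : P.eval 0 < 0 := by rw [heval]; simpa using hd'
    obtain ⟨x, hx, hxr⟩ := intermediate_value_Icc hM0.le
      (P.continuous.continuousOn) (Set.mem_Icc.mpr ⟨hP0.le, hPM.le⟩)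
    have hxr' : P.eval x = 0 := hxr
    have hx0 : 0 < x := by
      rcases lt_or_eq_of_le hx.1 with h | h
      · exact h
      · exfalso; rw [← h] at hxr'; rw [hxr'] at hP0; exact lt_irrefl _ hP0
    refine ⟨x, hx0, hxr', ?_, ?_⟩
    · rw [hderiv]; positivity
    · intro y hy hyr
      exact hmono.injOn (Set.mem_Ici.mpr hy) (Set.mem_Ici.mpr hx.1) (hyr.trans hxr'.symm)
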